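/- Let m, d, t be positive integers with t < m. If 2^m · d · (1 − 1/d)^{2^{m−t}} < 1, then there exists an (m, d, t)-weak exposure-resilient function J : {0,1}^m → [d]. (In particular, for the parameters arising from the paper's TUSP family, for all sufficiently large N there exists a (⌊s^{1+α/2}⌋, D^2, ⌊(1/2)s^{1+α/2}⌋)-wERF whenever D ≥ s^{1+α} and s ≥ N.) -/

import Mathlib

open Finset

private lemma prod_ite_card {α : Type*} [Fintype α] [DecidableEq α] (a b : ℕ) (T : Finset α) :
    (∏ x : α, if x ∈ T then a else b) = a ^ T.card * b ^ (Fintype.card α - T.card) := by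
  rw [← prod_filter_mul_prod_filter_not univ (· ∈ T)]
  rw [prod_congr rfl (fun x hx => if_pos (mem_filter.1 hx).2),
      prod_congr rfl (fun x hx => if_neg (mem_filter.1 hx).2),
      prod_const, prod_const]
  have h1 : filter (· ∈ T) univ = T := by ext x; simp
  have h2 : (filter (fun x => ¬ x ∈ T) univ).card = Fintype.card α - T.card := by
    rw [filter_not, h1, card_sdiff_of_subset (subset_univ _), card_univ]
  rw [h1, h2]

/-- number of functions `α → Fin d` avoiding value `c` on all of `T` -/
private lemma count_avoid {α : Type*} [Fintype α] [DecidableEq α] {d : ℕ} (c : Fin d)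
    (T : Finset α) :
    (Finset.univ.filter fun J : α → Fin d => ∀ b ∈ T, J b ≠ c).card
      = (d - 1) ^ T.card * d ^ (Fintype.card α - T.card) := by
  have key : (Finset.univ.filter fun J : α → Fin d => ∀ b ∈ T, J b ≠ c)
      = Fintype.piFinset (fun b => if b ∈ T then Finset.univ.erase c else Finset.univ) := by
    ext J
    simp only [Finset.mem_filter, Finset.mem_univ, true_and, Fintype.mem_piFinset]
    constructor
    · intro h b
      split_ifs with hb
      · exact Finset.mem_erase.2 ⟨h b hb, Finset.mem_univ _⟩
      · exact Finset.mem_univ _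
    · intro h b hb
      have := h b
      rw [if_pos hb] at this
      exact (Finset.mem_erase.1 this).1
  rw [key, Fintype.card_piFinset]
  have hc : ∀ b : α, (if b ∈ T then Finset.univ.erase c else (Finset.univ : Finset (Fin d))).card
      = if b ∈ T then d - 1 else d := by
    intro b
    split_ifs with hb
    · rw [Finset.card_erase_of_mem (Finset.mem_univ _), Finset.card_univ, Fintype.card_fin]
    · rw [Finset.card_univ, Fintype.card_fin]
  simp_rw [hc]
  exact prod_ite_card _ _ _

/-- number of strings vanishing on `S` -/
private lemma count_zero {m : ℕ} (S : Finset (Fin m)) :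
    (Finset.univ.filter fun b : Fin m → Bool => ∀ i ∈ S, b i = false).card
      = 2 ^ (m - S.card) := by
  have key : (Finset.univ.filter fun b : Fin m → Bool => ∀ i ∈ S, b i = false)
      = Fintype.piFinset (fun i => if i ∈ S then {false} else Finset.univ) := by
    ext b
    simp only [Finset.mem_filter, Finset.mem_univ, true_and, Fintype.mem_piFinset]
    constructor
    · intro h i
      split_ifs with hi
      · simp [h i hi]
      · exact Finset.mem_univ _
    · intro h i hi
      have := h i
      rw [if_pos hi] at this
      simpa using this
  rw [key, Fintype.card_piFinset]
  have hc : ∀ i : Fin m, (if i ∈ S then ({false} : Finset Bool) else Finset.univ).card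
      = if i ∈ S then 1 else 2 := by
    intro i; split_ifs <;> simp
  simp_rw [hc]
  rw [prod_ite_card, one_pow, one_mul]
  congr 1
  simp

private lemma term_le (d n z E : ℕ) (hnz : n ≤ z) (hzE : z ≤ E) :
    (d - 1) ^ z * d ^ (E - z) ≤ (d - 1) ^ n * d ^ (E - n) := by
  have h1 : (d - 1) ^ z = (d - 1) ^ n * (d - 1) ^ (z - n) := by
    rw [← pow_add]; congr 1; omega
  have h2 : d ^ (E - n) = d ^ (z - n) * d ^ (E - z) := by
    rw [← pow_add]; congr 1; omega
  rw [h1, h2, mul_assoc]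
  exact Nat.mul_le_mul_left _
    (Nat.mul_le_mul_right _ (Nat.pow_le_pow_left (Nat.sub_le d 1) _))



/-- `J : {0,1}^m → [d]` is an `(m, d, t)`-weak exposure-resilient function: for every
target value `c` and every set `S` of at most `t` coordinates, some preimage of `c`
is all-zero on `S`. -/
def IsWERF (m d t : ℕ) (J : (Fin m → Bool) → Fin d) : Prop :=
  ∀ c : Fin d, ∀ S : Finset (Fin m), S.card ≤ t →
    ∃ b : Fin m → Bool, J b = c ∧ ∀ i ∈ S, b i = false

/-- If `2^m · d · (1 - 1/d)^{2^{m-t}} < 1`, then an `(m, d, t)`-weak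
exposure-resilient function exists. -/
theorem exists_wERF (m d t : ℕ) (hm : 0 < m) (hd : 0 < d) (ht : 0 < t) (htm : t < m)
    (h : (2 : ℝ) ^ m * (d : ℝ) * (1 - 1 / (d : ℝ)) ^ (2 ^ (m - t)) < 1) :
    ∃ J : (Fin m → Bool) → Fin d, IsWERF m d t J := by
  -- trivial case d = 1
  rcases eq_or_lt_of_le (show 1 ≤ d from hd) with hd1 | hd2
  · refine ⟨fun _ => ⟨0, by omega⟩, fun c S _ => ⟨fun _ => false, ?_, fun _ _ => rfl⟩⟩
    exact Fin.ext (by have := c.isLt; omega)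
  · -- d ≥ 2
    set n : ℕ := 2 ^ (m - t) with hn
    set E : ℕ := 2 ^ m with hE
    have hnE : n ≤ E := Nat.pow_le_pow_right (by norm_num) (Nat.sub_le m t)
    have hdR : (0 : ℝ) < d := by positivity
    -- turn h into a Nat inequality
    have h1 : (1 - 1 / (d : ℝ)) = ((d - 1 : ℕ) : ℝ) / d := by
      rw [Nat.cast_sub (by omega : 1 ≤ d), Nat.cast_one]
      field_simp
    rw [h1, div_pow] at h
    have h2 : (2 : ℝ) ^ m * d * ((d - 1 : ℕ) : ℝ) ^ n < (d : ℝ) ^ n := by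
      have hp : (0 : ℝ) < (d : ℝ) ^ n := by positivity
      have := mul_lt_mul_of_pos_right h hp
      rw [one_mul] at this
      calc (2 : ℝ) ^ m * d * ((d - 1 : ℕ) : ℝ) ^ n
          = 2 ^ m * (d : ℝ) * (((d - 1 : ℕ) : ℝ) ^ n / (d : ℝ) ^ n) * (d : ℝ) ^ n := by
            field_simp
        _ < (d : ℝ) ^ n := this
    have hNat : 2 ^ m * d * (d - 1) ^ n < d ^ n := by exact_mod_cast h2
    have hkey : d * 2 ^ m * ((d - 1) ^ n * d ^ (E - n)) < d ^ E := by
      have hp : 0 < d ^ (E - n) := Nat.pow_pos (by omega)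
      calc d * 2 ^ m * ((d - 1) ^ n * d ^ (E - n))
          = (2 ^ m * d * (d - 1) ^ n) * d ^ (E - n) := by ring
        _ < d ^ n * d ^ (E - n) := (Nat.mul_lt_mul_right hp).2 hNat
        _ = d ^ E := by rw [← pow_add]; congr 1; omega
    -- counting argument
    by_contra hno
    push_neg at hno
    classical
    set pairs : Finset (Fin d × Finset (Fin m)) :=
      Finset.univ ×ˢ (Finset.univ.filter fun S : Finset (Fin m) => S.card ≤ t) with hpairs
    have cover : (Finset.univ : Finset ((Fin m → Bool) → Fin d)) ⊆
        pairs.biUnion (fun p => Finset.univ.filter fun J : (Fin m → Bool) → Fin d =>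
          ∀ b ∈ (Finset.univ.filter fun b : Fin m → Bool => ∀ i ∈ p.2, b i = false),
            J b ≠ p.1) := by
      intro J _
      have hJ := hno J
      unfold IsWERF at hJ
      push_neg at hJ
      obtain ⟨c, S, hS, hbad⟩ := hJ
      refine Finset.mem_biUnion.2 ⟨(c, S), ?_, ?_⟩
      · simp [hpairs, hS]
      · simp only [Finset.mem_filter, Finset.mem_univ, true_and]
        intro b hb hJb
        exact absurd (hbad b hJb) (by push_neg; exact hb)
    have hcard1 : d ^ E ≤ (pairs.biUnion (fun p => Finset.univ.filter fun J : (Fin m → Bool) → Fin d =>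
          ∀ b ∈ (Finset.univ.filter fun b : Fin m → Bool => ∀ i ∈ p.2, b i = false),
            J b ≠ p.1)).card := by
      calc d ^ E = (Finset.univ : Finset ((Fin m → Bool) → Fin d)).card := by
            rw [Finset.card_univ, Fintype.card_fun, Fintype.card_fin, Fintype.card_fun,
              Fintype.card_fin, Fintype.card_bool]
        _ ≤ _ := Finset.card_le_card cover
    have hcard2 : (pairs.biUnion (fun p => Finset.univ.filter fun J : (Fin m → Bool) → Fin d =>
          ∀ b ∈ (Finset.univ.filter fun b : Fin m → Bool => ∀ i ∈ p.2, b i = false),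
            J b ≠ p.1)).card ≤ d * 2 ^ m * ((d - 1) ^ n * d ^ (E - n)) := by
      calc _ ≤ ∑ p ∈ pairs, (Finset.univ.filter fun J : (Fin m → Bool) → Fin d =>
              ∀ b ∈ (Finset.univ.filter fun b : Fin m → Bool => ∀ i ∈ p.2, b i = false),
                J b ≠ p.1).card := Finset.card_biUnion_le
        _ ≤ ∑ _p ∈ pairs, (d - 1) ^ n * d ^ (E - n) := by
            refine Finset.sum_le_sum fun p hp => ?_
            have hpc : p.2.card ≤ t := by
              rw [hpairs] at hp
              simpa using (Finset.mem_product.1 hp).2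
            rw [count_avoid]
            have hz : (Finset.univ.filter fun b : Fin m → Bool =>
                ∀ i ∈ p.2, b i = false).card = 2 ^ (m - p.2.card) := count_zero p.2
            rw [hz]
            have hcardF : Fintype.card (Fin m → Bool) = E := by
              rw [Fintype.card_fun, Fintype.card_fin, Fintype.card_bool]
            rw [hcardF]
            refine term_le d n _ E ?_ ?_
            · exact Nat.pow_le_pow_right (by norm_num) (Nat.sub_le_sub_left hpc m)
            · exact Nat.pow_le_pow_right (by norm_num) (Nat.sub_le m _)
        _ = pairs.card * ((d - 1) ^ n * d ^ (E - n)) := by rw [Finset.sum_const, smul_eq_mul]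
        _ ≤ d * 2 ^ m * ((d - 1) ^ n * d ^ (E - n)) := by
            refine Nat.mul_le_mul_right _ ?_
            rw [hpairs, Finset.card_product, Finset.card_univ, Fintype.card_fin]
            refine Nat.mul_le_mul_left _ ?_
            calc (Finset.univ.filter fun S : Finset (Fin m) => S.card ≤ t).card
                ≤ (Finset.univ : Finset (Finset (Fin m))).card :=
                  Finset.card_le_card (Finset.filter_subset _ _)
              _ = 2 ^ m := by rw [Finset.card_univ, Fintype.card_finset, Fintype.card_fin]
    exact absurd hcard1 (not_le.2 (lt_of_le_of_lt hcard2 hkey))
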